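/- arXiv:1403.7677 — 3 statements merged into one kernel-verified Lean document; each statement's English description precedes it below -/
import Mathlib

section
/- Assume the standing setup, and assume additionally that A has a weak near unanimity term. Let θ be a congruence of C and let p, q, r, s be four distinct indices in ℤ ∖ [-n,0] with α_p θ α_r and α_q θ α_s. Then the elements α_{pq}, α_{rq}, α_{ps}, α_{rs} all belong to C and are pairwise θ-related. -/
/-- Terms of arity `k` over a signature with operation symbols `ι` of arities `arity`. -/
inductive AlgTerm (ι : Type) (arity : ι → ℕ) (k : ℕ) : Type
  | var : Fin k → AlgTerm ι arity k
  | app : (i : ι) → (Fin (arity i) → AlgTerm ι arity k) → AlgTerm ι arity k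

variable {ι : Type} {arity : ι → ℕ} {A : Type}

/-- Evaluation of a term in an algebra `⟨A, ops⟩` at a tuple `v` of arguments. -/
def AlgTerm.eval (ops : ∀ i, (Fin (arity i) → A) → A) {k : ℕ} :
    AlgTerm ι arity k → (Fin k → A) → A
  | .var j, v => v j
  | .app i ts, v => ops i fun m => (ts m).eval ops v

/-- `t` is a cube term for the algebra `⟨A, ops⟩`. -/
def IsCubeTerm (ops : ∀ i, (Fin (arity i) → A) → A) {k : ℕ} (t : AlgTerm ι arity k) : Prop :=
  ∀ i : Fin k, ∃ u : Fin k → Bool, u i = true ∧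
    ∀ x y : A, t.eval ops (fun j => if u j then y else x) = x

/-- The algebra `⟨A, ops⟩` has a cube term. -/
def HasCubeTerm (ops : ∀ i, (Fin (arity i) → A) → A) : Prop :=
  ∃ k : ℕ, 0 < k ∧ ∃ t : AlgTerm ι arity k, IsCubeTerm ops t

/-- The relation `a ≺ b`. -/
def Prec (ops : ∀ i, (Fin (arity i) → A) → A) (a b : A) : Prop :=
  ∃ k m : ℕ, 0 < k ∧ 0 < m ∧ ∃ t : AlgTerm ι arity k, ∃ u : Fin k → Fin m → A,
    (∀ i j, u i j = a ∨ u i j = b) ∧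
    (∀ i, ∃ j, u i j ≠ a) ∧
    (∀ j, t.eval ops (fun i => u i j) = a)

/-- `S` is a subuniverse of the algebra `⟨A, ops⟩`. -/
def IsSubuniverse (ops : ∀ i, (Fin (arity i) → A) → A) (S : Set A) : Prop :=
  ∀ (i : ι) (x : Fin (arity i) → A), (∀ j, x j ∈ S) → ops i x ∈ S

/-- The operations of `⟨A, ops⟩` restricted to a subuniverse `S`. -/
def subOps (ops : ∀ i, (Fin (arity i) → A) → A) {S : Set A} (hS : IsSubuniverse ops S) :
    ∀ i, (Fin (arity i) → S) → S :=
  fun i x => ⟨ops i (fun j => (x j : A)), hS i _ (fun j => (x j).2)⟩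

/-- Membership in the subuniverse generated by `S`. -/
inductive Closure (ops : ∀ i, (Fin (arity i) → A) → A) (S : Set A) : A → Prop
  | base {x : A} : x ∈ S → Closure ops S x
  | app (i : ι) (x : Fin (arity i) → A) : (∀ j, Closure ops S (x j)) → Closure ops S (ops i x)

/-- `t` is an idempotent term of `⟨A, ops⟩`. -/
def IsIdemTerm (ops : ∀ i, (Fin (arity i) → A) → A) {k : ℕ} (t : AlgTerm ι arity k) : Prop :=
  ∀ x : A, t.eval ops (fun _ => x) = x

/-- `S` is a subuniverse of the idempotent reduct of `⟨A, ops⟩`, i.e. `S` is closed under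
all idempotent term operations of `⟨A, ops⟩`. -/
def IsSubuniverseI (ops : ∀ i, (Fin (arity i) → A) → A) (S : Set A) : Prop :=
  ∀ (k : ℕ) (t : AlgTerm ι arity k), IsIdemTerm ops t →
    ∀ x : Fin k → A, (∀ i, x i ∈ S) → t.eval ops x ∈ S

/-- The relation `a ≺ b` relative to the idempotent terms of `⟨A, ops⟩`. -/
def PrecI (ops : ∀ i, (Fin (arity i) → A) → A) (a b : A) : Prop :=
  ∃ k m : ℕ, 0 < k ∧ 0 < m ∧ ∃ t : AlgTerm ι arity k, IsIdemTerm ops t ∧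
    ∃ u : Fin k → Fin m → A,
      (∀ i j, u i j = a ∨ u i j = b) ∧
      (∀ i, ∃ j, u i j ≠ a) ∧
      (∀ j, t.eval ops (fun i => u i j) = a)

/-- The algebra induced on the set `S` by the idempotent term operations of `⟨A, ops⟩`
has a cube term. -/
def HasCubeTermOnI (ops : ∀ i, (Fin (arity i) → A) → A) (S : Set A) : Prop :=
  ∃ k : ℕ, 0 < k ∧ ∃ t : AlgTerm ι arity k, IsIdemTerm ops t ∧
    ∀ i : Fin k, ∃ u : Fin k → Bool, u i = true ∧
      ∀ x y : A, x ∈ S → y ∈ S → t.eval ops (fun j => if u j then y else x) = x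

/-- The coordinatewise action of the operations of `⟨A, ops⟩` on `A^ℤ`. -/
def powOps (ops : ∀ i, (Fin (arity i) → A) → A) :
    ∀ i, (Fin (arity i) → (ℤ → A)) → (ℤ → A) :=
  fun i x j => ops i fun m => x m j

/-- The element `α_{i_1 ⋯ i_k}` of `A^ℤ`, where `I = {i_1, …, i_k}`. -/
noncomputable def alphaFn (n : ℕ) (aIdx : ℤ → A) (a b : A) (I : Finset ℤ) : ℤ → A :=
  fun j => if j ∈ Finset.Icc (-(n : ℤ)) 0 then aIdx j else if j ∈ I then b else a

/-- The set `C_0 = {α_i : i ∈ ℤ ∖ [-n,0]}`. -/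
def C0set (n : ℕ) (aIdx : ℤ → A) (a b : A) : Set (ℤ → A) :=
  {x | ∃ i : ℤ, i ∉ Finset.Icc (-(n : ℤ)) 0 ∧ x = alphaFn n aIdx a b {i}}

/-- `θ` is a congruence of the subalgebra with universe `C`: an equivalence relation on `C`
compatible with all the operations. -/
def IsCongOn (ops : ∀ i, (Fin (arity i) → A) → A) (C : Set A) (θ : A → A → Prop) : Prop :=
  (∀ x ∈ C, θ x x) ∧
  (∀ x ∈ C, ∀ y ∈ C, θ x y → θ y x) ∧
  (∀ x ∈ C, ∀ y ∈ C, ∀ z ∈ C, θ x y → θ y z → θ x z) ∧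
  (∀ (i : ι) (x y : Fin (arity i) → A), (∀ j, x j ∈ C) → (∀ j, y j ∈ C) →
    (∀ j, θ (x j) (y j)) → θ (ops i x) (ops i y))

/-- `t` is a weak near unanimity term for `⟨A, ops⟩`. -/
def IsWNU (ops : ∀ i, (Fin (arity i) → A) → A) {k : ℕ} (t : AlgTerm ι arity k) : Prop :=
  2 ≤ k ∧ (∀ x : A, t.eval ops (fun _ => x) = x) ∧
  ∀ (x y : A) (i i' : Fin k),
    t.eval ops (Function.update (fun _ => x) i y) =
      t.eval ops (Function.update (fun _ => x) i' y)

section StarAux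

variable {ι : Type} {arity : ι → ℕ} {A : Type}

/-- Substitution of terms for variables. -/
def AlgTerm.bind {k k' : ℕ} (σ : Fin k → AlgTerm ι arity k') :
    AlgTerm ι arity k → AlgTerm ι arity k'
  | .var j => σ j
  | .app i ts => .app i (fun m => (ts m).bind σ)

lemma AlgTerm.eval_bind (ops : ∀ i, (Fin (arity i) → A) → A) {k k' : ℕ}
    (σ : Fin k → AlgTerm ι arity k') (t : AlgTerm ι arity k) (v : Fin k' → A) :
    (t.bind σ).eval ops v = t.eval ops (fun i => (σ i).eval ops v) := by
  induction t with
  | var j => rfl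
  | app i ts ih =>
      show ops i _ = ops i _
      exact congrArg (ops i) (funext fun m => ih m)

/-- `v` is a reachable pattern-value vector: there is an idempotent term `t` and an
assignment of its variables to the `m` tracked coordinates such that for each coordinate
`c`, evaluating `t` on the boolean pattern of `c` (value `b` on the variables assigned to
`c`, value `a` elsewhere) yields `v c`. -/
def Reach (ops : ∀ i, (Fin (arity i) → A) → A) (a b : A) (m : ℕ) (v : Fin m → A) : Prop :=
  ∃ k : ℕ, ∃ t : AlgTerm ι arity k, IsIdemTerm ops t ∧ ∃ blk : Fin k → Fin m,
    ∀ c, t.eval ops (fun i => if blk i = c then b else a) = v c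

/-- The vector `(x, y, a, a, …, a)` of length `l+2`. -/
def vec3 (a x y : A) (l : ℕ) : Fin (l + 2) → A :=
  fun c => if (c : ℕ) = 0 then x else if (c : ℕ) = 1 then y else a

lemma reach_closed (ops : ∀ i, (Fin (arity i) → A) → A) (a b : A) {m j : ℕ} (hm : 0 < m)
    (s : AlgTerm ι arity j) (hs : IsIdemTerm ops s) (v : Fin j → Fin m → A)
    (hv : ∀ i, Reach ops a b m (v i)) :
    Reach ops a b m (fun c => s.eval ops (fun i => v i c)) := by
  classical
  choose kk tt htt blk hblk using hv
  set K : ℕ := Finset.univ.sup kk with hKdef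
  have hK : ∀ i, kk i ≤ K := fun i => Finset.le_sup (Finset.mem_univ i)
  have hemb : ∀ i : Fin j, ∀ x : Fin (kk i), ((Fin.castLE (hK i) x : Fin K) : ℕ) < kk i := by
    intro i x; simpa using x.isLt
  refine ⟨j * K,
    s.bind (fun i => (tt i).bind
      (fun x => AlgTerm.var (finProdFinEquiv (i, Fin.castLE (hK i) x)))), ?_, ?_⟩
  · intro x
    rw [AlgTerm.eval_bind]
    have h1 : (fun i => ((tt i).bind
        (fun x' => AlgTerm.var (finProdFinEquiv (i, Fin.castLE (hK i) x')))).eval ops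
        (fun _ => x)) = fun _ => x := by
      funext i
      rw [AlgTerm.eval_bind]
      exact htt i x
    rw [h1]
    exact hs x
  · set blkE : (i : Fin j) → Fin K → Fin m := fun i x =>
      if h : (x : ℕ) < kk i then blk i ⟨x, h⟩ else ⟨0, hm⟩ with hblkE
    set BLK : Fin (j * K) → Fin m := fun pp =>
      blkE (finProdFinEquiv.symm pp).1 (finProdFinEquiv.symm pp).2 with hBLK
    refine ⟨BLK, ?_⟩
    intro c
    rw [AlgTerm.eval_bind]
    have hinner : ∀ i, ((tt i).bind
        (fun x' => AlgTerm.var (finProdFinEquiv (i, Fin.castLE (hK i) x')))).eval ops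
        (fun pp => if BLK pp = c then b else a) = v i c := by
      intro i
      rw [AlgTerm.eval_bind]
      have hb : ∀ x' : Fin (kk i), BLK (finProdFinEquiv (i, Fin.castLE (hK i) x')) = blk i x' := by
        intro x'
        rw [hBLK]
        have hq : finProdFinEquiv.symm (finProdFinEquiv (i, Fin.castLE (hK i) x'))
            = (i, Fin.castLE (hK i) x') := Equiv.symm_apply_apply _ _
        show blkE (finProdFinEquiv.symm (finProdFinEquiv (i, Fin.castLE (hK i) x'))).1
            (finProdFinEquiv.symm (finProdFinEquiv (i, Fin.castLE (hK i) x'))).2 = blk i x'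
        rw [hq, hblkE]
        show (if h : ((Fin.castLE (hK i) x' : Fin K) : ℕ) < kk i
            then blk i ⟨_, h⟩ else ⟨0, hm⟩) = blk i x'
        rw [dif_pos (hemb i x')]
        exact congrArg (blk i) (Fin.ext rfl)
      have h2 : (fun x' : Fin (kk i) =>
          (AlgTerm.var (finProdFinEquiv (i, Fin.castLE (hK i) x')) : AlgTerm ι arity (j*K)).eval ops
            (fun pp => if BLK pp = c then b else a))
          = fun x' => if blk i x' = c then b else a := by
        funext x'
        show (if BLK (finProdFinEquiv (i, Fin.castLE (hK i) x')) = c then b else a) = _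
        rw [hb x']
      rw [h2, hblk i c]
    exact (congrArg (AlgTerm.eval ops s) (funext hinner))

lemma reach_pad (ops : ∀ i, (Fin (arity i) → A) → A) (a b : A) {l l' : ℕ} (h : l ≤ l')
    {x y : A} (hr : Reach ops a b (l + 2) (vec3 a x y l)) :
    Reach ops a b (l' + 2) (vec3 a x y l') := by
  classical
  obtain ⟨k, t, ht, blk, hv⟩ := hr
  refine ⟨k, t, ht, fun i => Fin.castLE (by omega) (blk i), ?_⟩
  intro c
  by_cases hc : (c : ℕ) < l + 2
  · have h1 : (fun i => if Fin.castLE (by omega : l + 2 ≤ l' + 2) (blk i) = c then b else a)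
        = fun i => if blk i = (⟨(c : ℕ), hc⟩ : Fin (l + 2)) then b else a := by
      funext i
      congr 1
      rw [Fin.ext_iff, Fin.ext_iff]
      simp
    rw [h1, hv ⟨(c : ℕ), hc⟩]
    simp only [vec3]
  · have h1 : (fun i => if Fin.castLE (by omega : l + 2 ≤ l' + 2) (blk i) = c then b else a)
        = fun _ => a := by
      funext i
      rw [if_neg]
      intro hcon
      rw [Fin.ext_iff] at hcon
      simp at hcon
      omega
    rw [h1, ht a]
    simp only [vec3]
    rw [if_neg (by omega), if_neg (by omega)]

lemma reach_swap (ops : ∀ i, (Fin (arity i) → A) → A) (a b : A) {l : ℕ}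
    {x y : A} (hr : Reach ops a b (l + 2) (vec3 a x y l)) :
    Reach ops a b (l + 2) (vec3 a y x l) := by
  classical
  obtain ⟨k, t, ht, blk, hv⟩ := hr
  set sw : Fin (l + 2) → Fin (l + 2) := fun c =>
    if (c : ℕ) = 0 then ⟨1, by omega⟩ else if (c : ℕ) = 1 then ⟨0, by omega⟩ else c with hsw
  have hswv : ∀ c : Fin (l + 2), (sw c : ℕ) = if (c : ℕ) = 0 then 1 else if (c : ℕ) = 1 then 0 else (c : ℕ) := by
    intro c
    rw [hsw]
    by_cases h0 : (c : ℕ) = 0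
    · simp [h0]
    · by_cases h1 : (c : ℕ) = 1 <;> simp [h0, h1]
  have hswsw : ∀ c, sw (sw c) = c := by
    intro c
    rw [Fin.ext_iff, hswv, hswv]
    by_cases h0 : (c : ℕ) = 0
    · simp [h0]
    · by_cases h1 : (c : ℕ) = 1 <;> simp [h0, h1]
  refine ⟨k, t, ht, fun i => sw (blk i), ?_⟩
  intro c
  have h1 : (fun i => if sw (blk i) = c then b else a)
      = fun i => if blk i = sw c then b else a := by
    funext i
    congr 1
    exact propext ⟨fun hh => by rw [← hh, hswsw], fun hh => by rw [hh, hswsw]⟩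
  rw [h1, hv (sw c)]
  simp only [vec3, hswv]
  by_cases h0 : (c : ℕ) = 0
  · simp [h0]
  · by_cases h1 : (c : ℕ) = 1 <;> simp [h0, h1]
lemma vec3_zero (a x y : A) (l : ℕ) : vec3 a x y l ⟨0, by omega⟩ = x := rfl

lemma vec3_one (a x y : A) (l : ℕ) : vec3 a x y l ⟨1, by omega⟩ = y := rfl

/-- The base witness: `(x, b)` is reachable with first coordinate `a`, i.e. `(a,b)`. -/
lemma reach_ab (ops : ∀ i, (Fin (arity i) → A) → A) (a b : A) :
    Reach ops a b (0 + 2) (vec3 a a b 0) := by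
  classical
  refine ⟨2, AlgTerm.var ⟨1, by omega⟩, fun x => rfl, fun i => ⟨(i : ℕ), i.isLt⟩, ?_⟩
  intro c
  show (if (⟨1, by omega⟩ : Fin (0+2)) = c then b else a) = vec3 a a b 0 c
  rcases c with ⟨cv, hc⟩
  interval_cases cv
  · rw [if_neg (by rw [Fin.ext_iff]; simp)]
    rfl
  · rw [if_pos rfl]
    rfl

/-- Any element of the form `t(χ)` with `t` idempotent and `χ` an `{a,b}`-pattern is in `B`. -/
lemma reach_fst_mem (ops : ∀ i, (Fin (arity i) → A) → A) {B : Set A}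
    (hBsub : IsSubuniverseI ops B) {a b : A} (haB : a ∈ B) (hbB : b ∈ B)
    {m : ℕ} {v : Fin m → A} (hr : Reach ops a b m v) (c : Fin m) : v c ∈ B := by
  classical
  obtain ⟨k, t, ht, blk, hv⟩ := hr
  rw [← hv c]
  exact hBsub k t ht _ (fun i => by by_cases h : blk i = c <;> simp [h, haB, hbB])

/-- Key cascade step: a subuniverse of `B` containing `a` but not `b` is disjoint from `D`. -/
lemma cube_blocker_disj (ops : ∀ i, (Fin (arity i) → A) → A)
    (B D : Set A) (a b : A)
    (hBmin : ∀ S : Set A, S ⊆ B → S ≠ B → S.Nonempty → IsSubuniverseI ops S →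
      HasCubeTermOnI ops S)
    (hBlock : ∀ k : ℕ, 0 < k → ∀ t : AlgTerm ι arity k, IsIdemTerm ops t →
      ∃ i : Fin k, ∀ x : Fin k → A, (∀ j, x j ∈ B) → x i ∈ D → t.eval ops x ∈ D)
    (haD : a ∉ D) (hbB : b ∈ B)
    (S : Set A) (hSB : S ⊆ B) (haS : a ∈ S) (hbS : b ∉ S) (hsub : IsSubuniverseI ops S)
    {z : A} (hzS : z ∈ S) (hzD : z ∈ D) : False := by
  classical
  have hSne : S ≠ B := fun h => hbS (h ▸ hbB)
  obtain ⟨k, hk, t, ht, hcube⟩ := hBmin S hSB hSne ⟨a, haS⟩ hsub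
  obtain ⟨i, hi⟩ := hBlock k hk t ht
  obtain ⟨u, hui, hid⟩ := hcube i
  have haDmem : a ∈ D := by
    have harg : ∀ j, (if u j then z else a) ∈ B := by
      intro j
      by_cases h : u j <;> simp [h, hSB hzS, hSB haS]
    have hai : (if u i then z else a) ∈ D := by rw [hui]; simpa using hzD
    have := hi (fun j => if u j then z else a) harg hai
    rwa [hid a z haS hzS] at this
  exact haD haDmem
lemma wnu_dc (ops : ∀ i, (Fin (arity i) → A) → A) (B D : Set A) (a b : A)
    (hBlock : ∀ k : ℕ, 0 < k → ∀ t : AlgTerm ι arity k, IsIdemTerm ops t →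
      ∃ i : Fin k, ∀ x : Fin k → A, (∀ j, x j ∈ B) → x i ∈ D → t.eval ops x ∈ D)
    (haB : a ∈ B) (hbB : b ∈ B) (hbD : b ∈ D)
    {kw : ℕ} (w : AlgTerm ι arity kw) (hwnu : IsWNU ops w) :
    ∃ d c : A, d ∈ D ∧ c ∈ D ∧ Reach ops a b (0 + 2) (vec3 a d c 0) := by
  classical
  have hkw : 2 ≤ kw := hwnu.1
  set i0 : Fin kw := ⟨0, by omega⟩ with hi0
  set d : A := w.eval ops (fun i => if i = i0 then b else a) with hd
  set c : A := w.eval ops (fun i => if i = i0 then a else b) with hc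
  have hword : ∀ (x y : A) (i' : Fin kw),
      (fun i => if i = i' then y else x) = Function.update (fun _ => x) i' y := by
    intro x y i'
    funext i
    rw [Function.update_apply]
  obtain ⟨iw, hiw⟩ := hBlock kw (by omega) w hwnu.2.1
  have hupdB : ∀ (x y : A), x ∈ B → y ∈ B → ∀ (i' : Fin kw) (i : Fin kw),
      Function.update (fun _ => x) i' y i ∈ B := by
    intro x y hx hy i' i
    rw [Function.update_apply]
    by_cases h : i = i' <;> simp [h, hx, hy]
  have hdD : d ∈ D := by
    have e1 : d = w.eval ops (Function.update (fun _ => a) iw b) := by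
      rw [hd, hword a b i0, hwnu.2.2 a b i0 iw]
    rw [e1]
    refine hiw _ (hupdB a b haB hbB iw) ?_
    rw [Function.update_self]
    exact hbD
  set jv : ℕ := if (iw : ℕ) = 0 then 1 else 0 with hjv
  have hjvlt : jv < kw := by
    rw [hjv]; split <;> omega
  set j0 : Fin kw := ⟨jv, hjvlt⟩ with hj0
  have hneq : iw ≠ j0 := by
    intro h
    rw [Fin.ext_iff, hj0] at h
    simp only at h
    rw [hjv] at h
    by_cases h0 : (iw : ℕ) = 0
    · rw [if_pos h0] at h; omega
    · rw [if_neg h0] at h; omega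
  have hcD : c ∈ D := by
    have e1 : c = w.eval ops (Function.update (fun _ => b) j0 a) := by
      rw [hc, hword b a i0, hwnu.2.2 b a i0 j0]
    rw [e1]
    refine hiw _ (hupdB b a hbB haB j0) ?_
    rw [Function.update_apply, if_neg hneq]
    exact hbD
  refine ⟨d, c, hdD, hcD, ?_⟩
  refine ⟨kw, w, hwnu.2.1, fun i => if i = i0 then ⟨0, by omega⟩ else ⟨1, by omega⟩, ?_⟩
  intro cc
  rcases cc with ⟨cv, hcv⟩
  interval_cases cv
  · have h1 : (fun i => if (if i = i0 then (⟨0, by omega⟩ : Fin (0+2)) else ⟨1, by omega⟩)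
        = ⟨0, by omega⟩ then b else a) = fun i => if i = i0 then b else a := by
      funext i
      by_cases h : i = i0 <;> simp [h, Fin.ext_iff]
    rw [h1]
    rfl
  · have h1 : (fun i => if (if i = i0 then (⟨0, by omega⟩ : Fin (0+2)) else ⟨1, by omega⟩)
        = ⟨1, by omega⟩ then b else a) = fun i => if i = i0 then a else b := by
      funext i
      by_cases h : i = i0 <;> simp [h, Fin.ext_iff]
    rw [h1]
    rfl
/-- The key lemma: `(b, b, a, …, a)` is a reachable pattern-value vector. -/
lemma star_reach (ops : ∀ i, (Fin (arity i) → A) → A) (B D : Set A) (a b : A)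
    (hBsub : IsSubuniverseI ops B)
    (hBmin : ∀ S : Set A, S ⊆ B → S ≠ B → S.Nonempty → IsSubuniverseI ops S →
      HasCubeTermOnI ops S)
    (hDsub : IsSubuniverseI ops D)
    (hDB : D ⊆ B)
    (hBlock : ∀ k : ℕ, 0 < k → ∀ t : AlgTerm ι arity k, IsIdemTerm ops t →
      ∃ i : Fin k, ∀ x : Fin k → A, (∀ j, x j ∈ B) → x i ∈ D → t.eval ops x ∈ D)
    (haB : a ∈ B) (haD : a ∉ D) (hbD : b ∈ D)
    (hWNU : ∃ (k : ℕ) (w : AlgTerm ι arity k), IsWNU ops w) :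
    ∃ l, Reach ops a b (l + 2) (vec3 a b b l) := by
  classical
  have hbB : b ∈ B := hDB hbD
  by_contra hnb
  set U : Set A := {x | ∃ l, Reach ops a b (l + 2) (vec3 a x b l)} with hU
  have haU : a ∈ U := ⟨0, reach_ab ops a b⟩
  have hbU : b ∉ U := hnb
  have hUclosed : IsSubuniverseI ops U := by
    intro kj t ht x hx
    choose ll hll using hx
    set L := Finset.univ.sup ll with hL
    have h1 : ∀ i, Reach ops a b (L + 2) (vec3 a (x i) b L) :=
      fun i => reach_pad ops a b (Finset.le_sup (Finset.mem_univ i)) (hll i)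
    have h2 := reach_closed ops a b (by omega) t ht _ h1
    refine ⟨L, ?_⟩
    have h3 : (fun cc => t.eval ops (fun i => vec3 a (x i) b L cc))
        = vec3 a (t.eval ops x) b L := by
      funext cc
      simp only [vec3]
      by_cases h0 : (cc : ℕ) = 0
      · simp [h0]
      · by_cases h1' : (cc : ℕ) = 1
        · simp [h0, h1', ht b]
        · simp [h0, h1', ht a]
    rwa [h3] at h2
  have hUB : U ⊆ B := by
    rintro x ⟨l, hr⟩
    exact reach_fst_mem ops hBsub haB hbB hr ⟨0, by omega⟩
  have hUD : ∀ z, z ∈ U → z ∈ D → False :=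
    fun z hz hzD => cube_blocker_disj ops B D a b hBmin hBlock haD hbB
      U hUB haU hbU hUclosed hz hzD
  set E : Set A := {x | ∃ y, y ∈ D ∧ ∃ l, Reach ops a b (l + 2) (vec3 a x y l)} with hE
  have haE : a ∈ E := ⟨b, hbD, 0, reach_ab ops a b⟩
  have hbE : b ∉ E := by
    rintro ⟨y, hyD, l, hr⟩
    exact hUD y ⟨l, reach_swap ops a b hr⟩ hyD
  have hEclosed : IsSubuniverseI ops E := by
    intro kj t ht x hx
    choose yy hyy ll hll using hx
    set L := Finset.univ.sup ll with hL
    have h1 : ∀ i, Reach ops a b (L + 2) (vec3 a (x i) (yy i) L) :=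
      fun i => reach_pad ops a b (Finset.le_sup (Finset.mem_univ i)) (hll i)
    have h2 := reach_closed ops a b (by omega) t ht _ h1
    refine ⟨t.eval ops yy, hDsub kj t ht yy hyy, L, ?_⟩
    have h3 : (fun cc => t.eval ops (fun i => vec3 a (x i) (yy i) L cc))
        = vec3 a (t.eval ops x) (t.eval ops yy) L := by
      funext cc
      simp only [vec3]
      by_cases h0 : (cc : ℕ) = 0
      · simp [h0]
      · by_cases h1' : (cc : ℕ) = 1
        · simp [h0, h1']
        · simp [h0, h1', ht a]
    rwa [h3] at h2
  have hEB : E ⊆ B := by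
    rintro x ⟨y, hyD, l, hr⟩
    exact reach_fst_mem ops hBsub haB hbB hr ⟨0, by omega⟩
  obtain ⟨kw, w, hwnu⟩ := hWNU
  obtain ⟨d, c, hdD, hcD, hrdc⟩ := wnu_dc ops B D a b hBlock haB hbB hbD w hwnu
  have hdE : d ∈ E := ⟨c, hcD, 0, hrdc⟩
  exact cube_blocker_disj ops B D a b hBmin hBlock haD hbB
    E hEB haE hbE hEclosed hdE hdD
lemma eval_coord (ops : ∀ i, (Fin (arity i) → A) → A) {k : ℕ} (t : AlgTerm ι arity k)
    (g : Fin k → ℤ → A) (j : ℤ) :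
    t.eval (powOps ops) g j = t.eval ops (fun i => g i j) := by
  induction t with
  | var i => rfl
  | app i ts ih =>
      show ops i (fun m => (ts m).eval (powOps ops) g j) = _
      exact congrArg (ops i) (funext fun m => ih m)

lemma closure_eval (ops : ∀ i, (Fin (arity i) → A) → A) (S : Set (ℤ → A))
    {k : ℕ} (t : AlgTerm ι arity k) (g : Fin k → ℤ → A)
    (hg : ∀ i, Closure (powOps ops) S (g i)) :
    Closure (powOps ops) S (t.eval (powOps ops) g) := by
  induction t with
  | var i => exact hg i
  | app i ts ih => exact Closure.app i _ (fun m => ih m)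

lemma cong_eval (ops : ∀ i, (Fin (arity i) → A) → A) (S : Set (ℤ → A))
    (θ : (ℤ → A) → (ℤ → A) → Prop) (hθ : IsCongOn (powOps ops) (Closure (powOps ops) S) θ)
    {k : ℕ} (t : AlgTerm ι arity k) (x y : Fin k → ℤ → A)
    (hx : ∀ i, Closure (powOps ops) S (x i)) (hy : ∀ i, Closure (powOps ops) S (y i))
    (hxy : ∀ i, θ (x i) (y i)) :
    θ (t.eval (powOps ops) x) (t.eval (powOps ops) y) := by
  induction t with
  | var i => exact hxy i
  | app i ts ih =>
      exact hθ.2.2.2 i (fun m => (ts m).eval (powOps ops) x)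
        (fun m => (ts m).eval (powOps ops) y)
        (fun m => closure_eval ops S (ts m) x hx)
        (fun m => closure_eval ops S (ts m) y hy)
        (fun m => ih m)

/-- Gluing lemma: from a reachability witness for `(b,b,a,…,a)` and an injective choice of
fresh coordinates, the corresponding combination of the generators `α_{co e}` equals
`α_{{co 0, co 1}}`. -/
lemma glue_eval (ops : ∀ i, (Fin (arity i) → A) → A) (n : ℕ) (aIdx : ℤ → A) (a b : A)
    {l k : ℕ} (t : AlgTerm ι arity k) (ht : IsIdemTerm ops t)
    (blk : Fin k → Fin (l + 2))
    (hval : ∀ c, t.eval ops (fun i => if blk i = c then b else a) = vec3 a b b l c)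
    (co : Fin (l + 2) → ℤ) (hinj : Function.Injective co)
    (hout : ∀ e, co e ∉ Finset.Icc (-(n : ℤ)) 0) :
    t.eval (powOps ops) (fun i => alphaFn n aIdx a b {co (blk i)})
      = alphaFn n aIdx a b {co ⟨0, by omega⟩, co ⟨1, by omega⟩} := by
  classical
  funext j
  rw [eval_coord]
  by_cases hj : j ∈ Finset.Icc (-(n : ℤ)) 0
  · have h1 : (fun i => alphaFn n aIdx a b {co (blk i)} j) = fun _ => aIdx j := by
      funext i
      simp [alphaFn, hj]
    rw [h1, ht (aIdx j)]
    simp [alphaFn, hj]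
  · by_cases he : ∃ e, co e = j
    · obtain ⟨e, he⟩ := he
      have h1 : (fun i => alphaFn n aIdx a b {co (blk i)} j)
          = fun i => if blk i = e then b else a := by
        funext i
        simp only [alphaFn, if_neg hj, Finset.mem_singleton]
        congr 1
        exact propext ⟨fun hh => (hinj (he.trans hh)).symm,
          fun hh => (he.symm.trans (congrArg co hh.symm))⟩
      rw [h1, hval e]
      simp only [alphaFn, if_neg hj, Finset.mem_insert, Finset.mem_singleton, vec3]
      by_cases h0 : (e : ℕ) = 0
      · have : e = ⟨0, by omega⟩ := Fin.ext h0
        rw [if_pos h0, if_pos (Or.inl (by rw [← he, this]))]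
      · by_cases h1' : (e : ℕ) = 1
        · have : e = ⟨1, by omega⟩ := Fin.ext h1'
          rw [if_neg h0, if_pos h1', if_pos (Or.inr (by rw [← he, this]))]
        · rw [if_neg h0, if_neg h1', if_neg]
          rintro (hh | hh)
          · exact h0 (congrArg Fin.val (hinj (he.trans hh)))
          · exact h1' (congrArg Fin.val (hinj (he.trans hh)))
    · have h1 : (fun i => alphaFn n aIdx a b {co (blk i)} j) = fun _ => a := by
        funext i
        simp only [alphaFn, if_neg hj, Finset.mem_singleton]
        rw [if_neg (fun hh => he ⟨blk i, hh.symm⟩)]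
      rw [h1, ht a]
      simp only [alphaFn, if_neg hj, Finset.mem_insert, Finset.mem_singleton]
      rw [if_neg]
      rintro (hh | hh)
      · exact he ⟨⟨0, by omega⟩, hh.symm⟩
      · exact he ⟨⟨1, by omega⟩, hh.symm⟩
/-- The choice of coordinates: `x`, `y`, and fresh large indices. -/
def coFn (M x y : ℤ) {l : ℕ} : Fin (l + 2) → ℤ :=
  fun e => if (e : ℕ) = 0 then x else if (e : ℕ) = 1 then y else M + (e : ℕ)

lemma coFn_zero (M x y : ℤ) {l : ℕ} : coFn M x y (⟨0, by omega⟩ : Fin (l + 2)) = x := rfl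

lemma coFn_one (M x y : ℤ) {l : ℕ} : coFn M x y (⟨1, by omega⟩ : Fin (l + 2)) = y := rfl

lemma coFn_inj {M x y : ℤ} (hxy : x ≠ y) (hx : x < M) (hy : y < M) {l : ℕ} :
    Function.Injective (coFn M x y (l := l)) := by
  intro e e' hh
  refine Fin.ext ?_
  by_cases h0 : (e : ℕ) = 0 <;> by_cases h1 : (e : ℕ) = 1 <;>
    by_cases h0' : (e' : ℕ) = 0 <;> by_cases h1' : (e' : ℕ) = 1 <;>
    simp only [coFn, h0, h1, h0', h1', if_true, if_false] at hh ⊢ <;>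
    simp_all <;> omega

lemma coFn_out (n : ℕ) {M x y : ℤ} (hx : x ∉ Finset.Icc (-(n : ℤ)) 0)
    (hy : y ∉ Finset.Icc (-(n : ℤ)) 0) (hM : 1 ≤ M) {l : ℕ} (e : Fin (l + 2)) :
    coFn M x y e ∉ Finset.Icc (-(n : ℤ)) 0 := by
  by_cases h0 : (e : ℕ) = 0
  · simpa [coFn, h0] using hx
  · by_cases h1 : (e : ℕ) = 1
    · simpa [coFn, h0, h1] using hy
    · simp only [coFn, h0, h1, if_false, Finset.mem_Icc]
      intro ⟨_, hcon⟩
      omega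

end StarAux

/-- In the standing setup, if `A` has a weak near unanimity term, `θ` is a
congruence of `C`, and `p, q, r, s` are distinct indices outside `[-n,0]` with
`α_p θ α_r` and `α_q θ α_s`, then `α_{pq}, α_{rq}, α_{ps}, α_{rs}` all belong to `C`
and are pairwise `θ`-related. -/
theorem stmt_4
    {ι A : Type} {arity : ι → ℕ} [Fintype A]
    (ops : ∀ i : ι, (Fin (arity i) → A) → A)
    -- the universe of `A` is enumerated as `{a_0, a_{-1}, …, a_{-n}}`
    (n : ℕ) (aIdx : ℤ → A)
    (hEnumSurj : ∀ x : A, ∃ j ∈ Finset.Icc (-(n : ℤ)) 0, aIdx j = x)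
    (hEnumInj : ∀ j ∈ Finset.Icc (-(n : ℤ)) 0, ∀ j' ∈ Finset.Icc (-(n : ℤ)) 0,
      aIdx j = aIdx j' → j = j')
    -- `A` has no cube term
    (hNoCube : ¬ HasCubeTerm ops)
    -- `B` is a subuniverse of the idempotent reduct `A_I`, without a cube term,
    -- minimal for this property
    (B : Set A) (hBsub : IsSubuniverseI ops B)
    (hBnoCube : ¬ HasCubeTermOnI ops B)
    (hBmin : ∀ S : Set A, S ⊆ B → S ≠ B → S.Nonempty → IsSubuniverseI ops S →
      HasCubeTermOnI ops S)
    -- `(D, B)` is a cube term blocker for the algebra `B`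
    (D : Set A) (hDsub : IsSubuniverseI ops D) (hDne : D.Nonempty)
    (hDB : D ⊆ B) (hDproper : D ≠ B)
    (hBlock : ∀ k : ℕ, 0 < k → ∀ t : AlgTerm ι arity k, IsIdemTerm ops t →
      ∃ i : Fin k, ∀ x : Fin k → A, (∀ j, x j ∈ B) → x i ∈ D → t.eval ops x ∈ D)
    -- `a ∈ B ∖ D` and `b ∈ D` with `a ⊀ b` relative to the idempotent terms of `A`
    (a b : A) (haB : a ∈ B) (haD : a ∉ D) (hbD : b ∈ D)
    (hab : ¬ PrecI ops a b)
    -- `A` has a weak near unanimity term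
    (hWNU : ∃ (k : ℕ) (w : AlgTerm ι arity k), IsWNU ops w)
    -- `θ` is a congruence of `C = Sg^{A^ℤ}(C_0)`
    (θ : (ℤ → A) → (ℤ → A) → Prop)
    (hθ : IsCongOn (powOps ops) (Closure (powOps ops) (C0set n aIdx a b)) θ)
    -- `p, q, r, s` are distinct indices in `ℤ ∖ [-n,0]`
    (p q r s : ℤ)
    (hp : p ∉ Finset.Icc (-(n : ℤ)) 0) (hq : q ∉ Finset.Icc (-(n : ℤ)) 0)
    (hr : r ∉ Finset.Icc (-(n : ℤ)) 0) (hs : s ∉ Finset.Icc (-(n : ℤ)) 0)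
    (hpq : p ≠ q) (hpr : p ≠ r) (hps : p ≠ s)
    (hqr : q ≠ r) (hqs : q ≠ s) (hrs : r ≠ s)
    (hθpr : θ (alphaFn n aIdx a b {p}) (alphaFn n aIdx a b {r}))
    (hθqs : θ (alphaFn n aIdx a b {q}) (alphaFn n aIdx a b {s})) :
    (Closure (powOps ops) (C0set n aIdx a b) (alphaFn n aIdx a b {p, q})) ∧
    (Closure (powOps ops) (C0set n aIdx a b) (alphaFn n aIdx a b {r, q})) ∧
    (Closure (powOps ops) (C0set n aIdx a b) (alphaFn n aIdx a b {p, s})) ∧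
    (Closure (powOps ops) (C0set n aIdx a b) (alphaFn n aIdx a b {r, s})) ∧
    θ (alphaFn n aIdx a b {p, q}) (alphaFn n aIdx a b {r, q}) ∧
    θ (alphaFn n aIdx a b {p, q}) (alphaFn n aIdx a b {p, s}) ∧
    θ (alphaFn n aIdx a b {p, q}) (alphaFn n aIdx a b {r, s}) ∧
    θ (alphaFn n aIdx a b {r, q}) (alphaFn n aIdx a b {p, s}) ∧
    θ (alphaFn n aIdx a b {r, q}) (alphaFn n aIdx a b {r, s}) ∧
    θ (alphaFn n aIdx a b {p, s}) (alphaFn n aIdx a b {r, s}) := by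
  classical
  obtain ⟨l, k, t, ht, blk, hval⟩ :=
    star_reach ops B D a b hBsub hBmin hDsub hDB hBlock haB haD hbD hWNU
  set M : ℤ := max (max (max p q) (max r s)) 0 + 1 with hMdef
  have hM1 : 1 ≤ M := by
    have h0 : (0:ℤ) ≤ max (max (max p q) (max r s)) 0 := le_max_right _ _
    omega
  have hpM : p < M := by
    have h1 : p ≤ max p q := le_max_left _ _
    have h2 : max p q ≤ max (max p q) (max r s) := le_max_left _ _
    have h3 : max (max p q) (max r s) ≤ max (max (max p q) (max r s)) 0 := le_max_left _ _
    omega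
  have hqM : q < M := by
    have h1 : q ≤ max p q := le_max_right _ _
    have h2 : max p q ≤ max (max p q) (max r s) := le_max_left _ _
    have h3 : max (max p q) (max r s) ≤ max (max (max p q) (max r s)) 0 := le_max_left _ _
    omega
  have hrM : r < M := by
    have h1 : r ≤ max r s := le_max_left _ _
    have h2 : max r s ≤ max (max p q) (max r s) := le_max_right _ _
    have h3 : max (max p q) (max r s) ≤ max (max (max p q) (max r s)) 0 := le_max_left _ _
    omega
  have hsM : s < M := by
    have h1 : s ≤ max r s := le_max_right _ _
    have h2 : max r s ≤ max (max p q) (max r s) := le_max_right _ _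
    have h3 : max (max p q) (max r s) ≤ max (max (max p q) (max r s)) 0 := le_max_left _ _
    omega
  have mk : ∀ x y : ℤ, x ≠ y → x < M → y < M →
      x ∉ Finset.Icc (-(n : ℤ)) 0 → y ∉ Finset.Icc (-(n : ℤ)) 0 →
      (t.eval (powOps ops) (fun i => alphaFn n aIdx a b {coFn M x y (blk i)})
          = alphaFn n aIdx a b {x, y})
        ∧ Closure (powOps ops) (C0set n aIdx a b) (alphaFn n aIdx a b {x, y}) := by
    intro x y hxy hxM hyM hxI hyI
    have hg := glue_eval ops n aIdx a b t ht blk hval (coFn M x y)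
      (coFn_inj hxy hxM hyM) (fun e => coFn_out n hxI hyI hM1 e)
    rw [coFn_zero, coFn_one] at hg
    refine ⟨hg, ?_⟩
    rw [← hg]
    exact closure_eval ops _ t _
      (fun i => Closure.base ⟨coFn M x y (blk i), coFn_out n hxI hyI hM1 _, rfl⟩)
  obtain ⟨hg_pq, hC_pq⟩ := mk p q hpq hpM hqM hp hq
  obtain ⟨hg_rq, hC_rq⟩ := mk r q (Ne.symm hqr) hrM hqM hr hq
  obtain ⟨hg_ps, hC_ps⟩ := mk p s hps hpM hsM hp hs
  obtain ⟨hg_rs, hC_rs⟩ := mk r s hrs hrM hsM hr hs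
  have hrefl : ∀ z : ℤ, z ∉ Finset.Icc (-(n : ℤ)) 0 →
      θ (alphaFn n aIdx a b {z}) (alphaFn n aIdx a b {z}) :=
    fun z hz => hθ.1 _ (Closure.base ⟨z, hz, rfl⟩)
  have mkθ : ∀ x y x' y' : ℤ, x ∉ Finset.Icc (-(n : ℤ)) 0 → y ∉ Finset.Icc (-(n : ℤ)) 0 →
      x' ∉ Finset.Icc (-(n : ℤ)) 0 → y' ∉ Finset.Icc (-(n : ℤ)) 0 →
      θ (alphaFn n aIdx a b {x}) (alphaFn n aIdx a b {x'}) →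
      θ (alphaFn n aIdx a b {y}) (alphaFn n aIdx a b {y'}) →
      θ (t.eval (powOps ops) (fun i => alphaFn n aIdx a b {coFn M x y (blk i)}))
        (t.eval (powOps ops) (fun i => alphaFn n aIdx a b {coFn M x' y' (blk i)})) := by
    intro x y x' y' hxI hyI hxI' hyI' hxx' hyy'
    refine cong_eval ops _ θ hθ t _ _
      (fun i => Closure.base ⟨_, coFn_out n hxI hyI hM1 _, rfl⟩)
      (fun i => Closure.base ⟨_, coFn_out n hxI' hyI' hM1 _, rfl⟩) (fun i => ?_)
    by_cases h0 : ((blk i : Fin (l+2)) : ℕ) = 0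
    · simpa [coFn, h0] using hxx'
    · by_cases h1 : ((blk i : Fin (l+2)) : ℕ) = 1
      · simpa [coFn, h0, h1] using hyy'
      · simp only [coFn, h0, h1, if_false]
        refine hrefl _ ?_
        simp only [Finset.mem_Icc]
        intro ⟨_, hcon⟩
        omega
  have θ12 : θ (alphaFn n aIdx a b {p, q}) (alphaFn n aIdx a b {r, q}) := by
    have h := mkθ p q r q hp hq hr hq hθpr (hrefl q hq)
    rwa [hg_pq, hg_rq] at h
  have θ13 : θ (alphaFn n aIdx a b {p, q}) (alphaFn n aIdx a b {p, s}) := by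
    have h := mkθ p q p s hp hq hp hs (hrefl p hp) hθqs
    rwa [hg_pq, hg_ps] at h
  have θ24 : θ (alphaFn n aIdx a b {r, q}) (alphaFn n aIdx a b {r, s}) := by
    have h := mkθ r q r s hr hq hr hs (hrefl r hr) hθqs
    rwa [hg_rq, hg_rs] at h
  have θ34 : θ (alphaFn n aIdx a b {p, s}) (alphaFn n aIdx a b {r, s}) := by
    have h := mkθ p s r s hp hs hr hs hθpr (hrefl s hs)
    rwa [hg_ps, hg_rs] at h
  have θ14 : θ (alphaFn n aIdx a b {p, q}) (alphaFn n aIdx a b {r, s}) :=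
    hθ.2.2.1 _ hC_pq _ hC_rq _ hC_rs θ12 θ24
  have θ23 : θ (alphaFn n aIdx a b {r, q}) (alphaFn n aIdx a b {p, s}) :=
    hθ.2.2.1 _ hC_rq _ hC_pq _ hC_ps (hθ.2.1 _ hC_pq _ hC_rq θ12) θ13
  exact ⟨hC_pq, hC_rq, hC_ps, hC_rs, θ12, θ13, θ14, θ23, θ24, θ34⟩
end

section
/- Assume the standing setup, and assume additionally that A has a weak near unanimity term. Let θ be a congruence of C and let p, q, r, s be four distinct indices in ℤ ∖ [-n,0] with α_p θ α_r and α_q θ α_s. Then the set {α_{mn} : (m,n) ∈ {p,r} × {q,s}} ∪ {α_{mnk} : (m,n,k) ∈ {p,r} × {q,s} × {p,q,r,s}} is contained in C and is contained in a single θ-class. -/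
variable {ι : Type} {arity : ι → ℕ} {A : Type}

/-- The family `{α_{mn} : (m,n) ∈ {p,r} × {q,s}} ∪
`{α_{mnk} : (m,n,k) ∈ {p,r} × {q,s} × {p,q,r,s}}`. -/
def famSet (n : ℕ) (aIdx : ℤ → A) (a b : A) (p q r s : ℤ) : Set (ℤ → A) :=
  {x | ∃ m' ∈ ({p, r} : Finset ℤ), ∃ w ∈ ({q, s} : Finset ℤ),
    x = alphaFn n aIdx a b {m', w} ∨
      ∃ k' ∈ ({p, q, r, s} : Finset ℤ), x = alphaFn n aIdx a b {m', w, k'}}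


namespace CTB

section Machinery

variable {ι : Type} {arity : ι → ℕ} {A : Type}

@[simp] lemma eval_var (ops : ∀ i, (Fin (arity i) → A) → A) {k : ℕ} (j : Fin k)
    (v : Fin k → A) : (AlgTerm.var (ι := ι) (arity := arity) j).eval ops v = v j := rfl

@[simp] lemma eval_app (ops : ∀ i, (Fin (arity i) → A) → A) {k : ℕ} (i : ι)
    (ts : Fin (arity i) → AlgTerm ι arity k) (v : Fin k → A) :
    (AlgTerm.app i ts).eval ops v = ops i (fun m => (ts m).eval ops v) := rfl

/-- Substitution of terms into a term. -/
def comp {k k' : ℕ} : AlgTerm ι arity k → (Fin k → AlgTerm ι arity k') → AlgTerm ι arity k'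
  | .var j, σ => σ j
  | .app i ts, σ => .app i fun m => comp (ts m) σ

lemma eval_comp (ops : ∀ i, (Fin (arity i) → A) → A) {k k' : ℕ} (t : AlgTerm ι arity k)
    (σ : Fin k → AlgTerm ι arity k') (v : Fin k' → A) :
    (comp t σ).eval ops v = t.eval ops (fun j => (σ j).eval ops v) := by
  induction t with
  | var j => rfl
  | app i ts ih =>
      simp only [comp, eval_app]
      congr 1
      funext m
      exact ih m

lemma eval_zero (ops : ∀ i, (Fin (arity i) → A) → A) (t : AlgTerm ι arity 0)
    (v w : Fin 0 → A) : t.eval ops v = t.eval ops w := by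
  induction t with
  | var j => exact j.elim0
  | app i ts ih =>
      simp only [eval_app]
      congr 1
      funext m
      exact ih m

section Concat

variable {kk : ℕ} (fam : Fin kk → ℕ)

/-- index type for concatenated variables -/
abbrev Cidx : Type := (i : Fin kk) × Fin (fam i)

noncomputable def cEquiv : Cidx fam ≃ Fin (Fintype.card (Cidx fam)) := Fintype.equivFin _

lemma sigma_elim_eq {p q : Cidx fam} (h : p = q) (U : ∀ i, Fin (fam i) → A) :
    U p.1 p.2 = U q.1 q.2 := by cases h; rfl

variable (ts : ∀ i : Fin kk, AlgTerm ι arity (fam i))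

noncomputable def concatTerm (t' : AlgTerm ι arity kk) :
    AlgTerm ι arity (Fintype.card (Cidx fam)) :=
  comp t' fun i => comp (ts i) fun l => .var (cEquiv fam ⟨i, l⟩)

lemma eval_concat (ops : ∀ i, (Fin (arity i) → A) → A) (t' : AlgTerm ι arity kk)
    (w : Fin (Fintype.card (Cidx fam)) → A) :
    (concatTerm fam ts t').eval ops w
      = t'.eval ops (fun i => (ts i).eval ops (fun l => w (cEquiv fam ⟨i, l⟩))) := by
  simp [concatTerm, eval_comp]

lemma concat_idem (ops : ∀ i, (Fin (arity i) → A) → A) (t' : AlgTerm ι arity kk)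
    (ht' : IsIdemTerm ops t') (hts : ∀ i, IsIdemTerm ops (ts i)) :
    IsIdemTerm ops (concatTerm fam ts t') := by
  intro x
  rw [eval_concat]
  have h1 : ∀ i, (ts i).eval ops (fun l => (fun _ : Fin (Fintype.card (Cidx fam)) => x) (cEquiv fam ⟨i, l⟩)) = x :=
    fun i => hts i x
  rw [show (fun i => (ts i).eval ops (fun l => (fun _ : Fin (Fintype.card (Cidx fam)) => x) (cEquiv fam ⟨i, l⟩)))
      = (fun _ : Fin kk => x) from funext h1]
  exact ht' x

lemma concat_card_pos (hkk : 0 < kk) (hfam : ∀ i, 0 < fam i) :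
    0 < Fintype.card (Cidx fam) :=
  Fintype.card_pos_iff.mpr ⟨⟨⟨0, hkk⟩, ⟨0, hfam _⟩⟩⟩

end Concat

end Machinery

end CTB

namespace CTB

section Robust

variable {ι : Type} {arity : ι → ℕ} {A : Type}
variable (ops : ∀ i, (Fin (arity i) → A) → A) (a b : A)

/-- `y` is robustly representable over `{a,b}`: for every position there is an
`{a,b}`-pattern with `b` at that position evaluating to `y`. -/
def IsRobust (y : A) : Prop :=
  ∃ M : ℕ, 0 < M ∧ ∃ V : AlgTerm ι arity M, IsIdemTerm ops V ∧
    ∃ π : Fin M → Fin M → A, (∀ l r, π l r = a ∨ π l r = b) ∧ (∀ l, π l l = b) ∧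
      (∀ l, V.eval ops (π l) = y)

private def tEntry {kc M : ℕ} (U : Fin kc → Fin kc → Bool) (π : Fin M → Fin M → A)
    (p : Cidx (fun _ : Fin kc => M)) (q : Fin kc × Fin M) : A :=
  if U q.1 p.1 then π q.2 p.2 else a

lemma robust_transfer (hba : b ≠ a) {y : A} (hrob : IsRobust ops a b y)
    {kc : ℕ} (hkc : 0 < kc) {tc : AlgTerm ι arity kc} (htcI : IsIdemTerm ops tc)
    (U : Fin kc → Fin kc → Bool) (hU1 : ∀ i, U i i = true)
    (hU2 : ∀ j, tc.eval ops (fun i => if U j i then y else a) = a) :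
    PrecI ops a b := by
  classical
  obtain ⟨M, hM, V, hVI, π, hπd, hπdiag, hπval⟩ := hrob
  set fam : Fin kc → ℕ := fun _ => M with hfam
  set E := cEquiv fam with hE
  set E2 := Fintype.equivFin (Fin kc × Fin M) with hE2
  refine ⟨Fintype.card (Cidx fam), Fintype.card (Fin kc × Fin M),
    concat_card_pos fam hkc (fun _ => hM),
    Fintype.card_pos_iff.mpr ⟨(⟨0, hkc⟩, ⟨0, hM⟩)⟩,
    concatTerm fam (fun _ => V) tc,
    ⟨concat_idem fam (fun _ => V) ops tc htcI (fun _ => hVI), ?_⟩⟩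
  refine ⟨fun r c => tEntry a U π (E.symm r) (E2.symm c), ?_, ?_, ?_⟩
  · intro r c
    dsimp only
    unfold tEntry
    split
    · exact hπd _ _
    · exact Or.inl rfl
  · intro r
    refine ⟨E2 ((E.symm r).1, (E.symm r).2), ?_⟩
    dsimp only
    rw [Equiv.symm_apply_apply]
    unfold tEntry
    simp only [hU1 (E.symm r).1, if_true]
    rw [hπdiag]
    exact hba
  · intro c
    dsimp only
    rw [eval_concat]
    have hEE : ∀ p : Cidx fam, E.symm (E p) = p := fun p => Equiv.symm_apply_apply E p
    have hinner : ∀ i : Fin kc,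
        (fun l => tEntry a U π (E.symm (E ⟨i, l⟩)) (E2.symm c))
          = fun l => tEntry a U π ⟨i, l⟩ (E2.symm c) := by
      intro i
      funext l
      rw [hEE]
    have hblock : ∀ i : Fin kc,
        V.eval ops (fun l => tEntry a U π ⟨i, l⟩ (E2.symm c))
          = (if U (E2.symm c).1 i then y else a) := by
      intro i
      by_cases h : U (E2.symm c).1 i
      · simp only [tEntry, h, if_true]
        exact hπval _
      · simp only [tEntry, h, if_false]
        exact hVI a
    have hfun : (fun i => V.eval ops (fun l => tEntry a U π (E.symm (E ⟨i, l⟩)) (E2.symm c)))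
        = fun i => if U (E2.symm c).1 i then y else a := by
      funext i
      rw [hinner i]
      exact hblock i
    rw [hfun]
    exact hU2 _

/-- Minimality principle: a subuniverse of `B` containing `a` and a robust element
must contain `b`. -/
lemma min_mem {B : Set A}
    (hBmin : ∀ S : Set A, S ⊆ B → S ≠ B → S.Nonempty → IsSubuniverseI ops S →
      HasCubeTermOnI ops S)
    (hab : ¬ PrecI ops a b) (hba : b ≠ a) (hbB : b ∈ B)
    {S : Set A} (hSsub : IsSubuniverseI ops S) (hSB : S ⊆ B) (haS : a ∈ S)
    {y : A} (hyS : y ∈ S) (hrob : IsRobust ops a b y) : b ∈ S := by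
  by_contra hbS
  obtain ⟨kc, hkc, tc, htcI, hcube⟩ :=
    hBmin S hSB (fun h => hbS (h ▸ hbB)) ⟨a, haS⟩ hSsub
  choose U hU1 hU2 using hcube
  exact hab (robust_transfer ops a b hba hrob hkc htcI U hU1
    (fun j => hU2 j a y haS hyS))

end Robust

end CTB

namespace CTB

section Sets

variable {ι : Type} {arity : ι → ℕ} {A : Type}
variable (ops : ∀ i, (Fin (arity i) → A) → A) (a b : A)

open Classical in
/-- swap `a` and everything else to `a`, `a` to `b`. -/
noncomputable def cmpl (x : A) : A := if x = a then b else a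

@[simp] lemma cmpl_a : cmpl a b a = b := by simp [cmpl]

lemma cmpl_b (hba : b ≠ a) : cmpl a b b = a := by simp [cmpl, hba]

/-- The subuniverse of the idempotent reduct generated by `{a, s}`. -/
def SgPair (s : A) : Set A :=
  {x | ∃ k : ℕ, 0 < k ∧ ∃ t : AlgTerm ι arity k, IsIdemTerm ops t ∧
    ∃ c : Fin k → A, (∀ i, c i = a ∨ c i = s) ∧ t.eval ops c = x}

/-- The set of second coordinates of pairs `(b, y)` in the subalgebra of `A²`
generated by `(a,b)` and `(b,a)` (in the idempotent reduct). -/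
def FbSet : Set A :=
  {x | ∃ k : ℕ, 0 < k ∧ ∃ t : AlgTerm ι arity k, IsIdemTerm ops t ∧
    ∃ u : Fin k → A, (∀ i, u i = a ∨ u i = b) ∧ t.eval ops u = b ∧
      t.eval ops (fun l => cmpl a b (u l)) = x}

lemma var_idem (j : Fin 1) : IsIdemTerm ops (AlgTerm.var (ι := ι) (arity := arity) j) :=
  fun _ => rfl

lemma a_mem_SgPair (s : A) : a ∈ SgPair ops a s :=
  ⟨1, one_pos, .var 0, var_idem ops 0, fun _ => a, fun _ => Or.inl rfl, rfl⟩

lemma s_mem_SgPair (s : A) : s ∈ SgPair ops a s :=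
  ⟨1, one_pos, .var 0, var_idem ops 0, fun _ => s, fun _ => Or.inr rfl, rfl⟩

lemma a_mem_FbSet (hba : b ≠ a) : a ∈ FbSet ops a b :=
  ⟨1, one_pos, .var 0, var_idem ops 0, fun _ => b, fun _ => Or.inr rfl, rfl,
    by simpa using cmpl_b a b hba⟩

lemma SgPair_subset_B {B : Set A} (hBsub : IsSubuniverseI ops B)
    (haB : a ∈ B) {s : A} (hsB : s ∈ B) : SgPair ops a s ⊆ B := by
  rintro x ⟨k, hk, t, ht, c, hc, rfl⟩
  exact hBsub k t ht c (fun i => (hc i).elim (fun h => h ▸ haB) (fun h => h ▸ hsB))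

lemma FbSet_subset_B {B : Set A} (hBsub : IsSubuniverseI ops B)
    (haB : a ∈ B) (hbB : b ∈ B) : FbSet ops a b ⊆ B := by
  rintro x ⟨k, hk, t, ht, u, hu, h1, rfl⟩
  refine hBsub k t ht _ (fun i => ?_)
  unfold cmpl
  split
  · exact hbB
  · exact haB

lemma SgPair_subuniverse (hba : b ≠ a) (s : A) :
    IsSubuniverseI ops (SgPair ops a s) := by
  intro kk t' ht' xs hxs
  rcases Nat.eq_zero_or_pos kk with hk0 | hkpos
  · subst hk0
    have : a = b := (ht' a).symm.trans ((eval_zero ops t' (fun _ => a) (fun _ => b)).trans (ht' b))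
    exact absurd this (Ne.symm hba)
  · choose kf hkf tf htf cf hcf hcfe using hxs
    have hEE : ∀ p : Cidx kf, (cEquiv kf).symm (cEquiv kf p) = p :=
      fun p => Equiv.symm_apply_apply _ p
    refine ⟨Fintype.card (Cidx kf), concat_card_pos kf hkpos hkf, concatTerm kf tf t',
      concat_idem kf tf ops t' ht' htf,
      fun r => cf ((cEquiv kf).symm r).1 ((cEquiv kf).symm r).2, fun r => hcf _ _, ?_⟩
    rw [eval_concat]
    have hfun : (fun i => (tf i).eval ops (fun l =>
          (fun r => cf ((cEquiv kf).symm r).1 ((cEquiv kf).symm r).2) (cEquiv kf ⟨i, l⟩)))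
        = xs := by
      funext i
      rw [show (fun l => (fun r => cf ((cEquiv kf).symm r).1 ((cEquiv kf).symm r).2)
            (cEquiv kf ⟨i, l⟩)) = cf i from
        funext fun l => sigma_elim_eq kf (hEE ⟨i, l⟩) cf]
      exact hcfe i
    rw [hfun]

lemma FbSet_subuniverse (hba : b ≠ a) :
    IsSubuniverseI ops (FbSet ops a b) := by
  intro kk t' ht' xs hxs
  rcases Nat.eq_zero_or_pos kk with hk0 | hkpos
  · subst hk0
    have : a = b := (ht' a).symm.trans ((eval_zero ops t' (fun _ => a) (fun _ => b)).trans (ht' b))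
    exact absurd this (Ne.symm hba)
  · choose kf hkf tf htf uf huf huf1 huf2 using hxs
    have hEE : ∀ p : Cidx kf, (cEquiv kf).symm (cEquiv kf p) = p :=
      fun p => Equiv.symm_apply_apply _ p
    refine ⟨Fintype.card (Cidx kf), concat_card_pos kf hkpos hkf, concatTerm kf tf t',
      concat_idem kf tf ops t' ht' htf,
      fun r => uf ((cEquiv kf).symm r).1 ((cEquiv kf).symm r).2, fun r => huf _ _, ?_, ?_⟩
    · rw [eval_concat]
      have hfun : (fun i => (tf i).eval ops (fun l =>
            (fun r => uf ((cEquiv kf).symm r).1 ((cEquiv kf).symm r).2) (cEquiv kf ⟨i, l⟩)))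
          = fun _ => b := by
        funext i
        rw [show (fun l => (fun r => uf ((cEquiv kf).symm r).1 ((cEquiv kf).symm r).2)
              (cEquiv kf ⟨i, l⟩)) = uf i from
          funext fun l => sigma_elim_eq kf (hEE ⟨i, l⟩) uf]
        exact huf1 i
      rw [hfun]
      exact ht' b
    · rw [eval_concat]
      have hfun : (fun i => (tf i).eval ops (fun l => cmpl a b
            ((fun r => uf ((cEquiv kf).symm r).1 ((cEquiv kf).symm r).2) (cEquiv kf ⟨i, l⟩))))
          = xs := by
        funext i
        rw [show (fun l => cmpl a b ((fun r => uf ((cEquiv kf).symm r).1 ((cEquiv kf).symm r).2)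
              (cEquiv kf ⟨i, l⟩))) = fun l => cmpl a b (uf i l) from
          funext fun l => congrArg (cmpl a b) (sigma_elim_eq kf (hEE ⟨i, l⟩) uf)]
        exact huf2 i
      rw [hfun]

end Sets

end CTB

namespace CTB

section KeyF

variable {ι : Type} {arity : ι → ℕ} {A : Type}

theorem exists_semilattice_term (ops : ∀ i, (Fin (arity i) → A) → A)
    {B : Set A} (hBsub : IsSubuniverseI ops B)
    (hBmin : ∀ S : Set A, S ⊆ B → S ≠ B → S.Nonempty → IsSubuniverseI ops S →
      HasCubeTermOnI ops S)
    {a b : A} (haB : a ∈ B) (hbB : b ∈ B) (hab : ¬ PrecI ops a b) (hba : b ≠ a)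
    (hWNU : ∃ (k : ℕ) (w : AlgTerm ι arity k), IsWNU ops w) :
    ∃ f : AlgTerm ι arity 2, IsIdemTerm ops f ∧
      f.eval ops (fun i => if i = 0 then a else b) = b ∧
      f.eval ops (fun i => if i = 0 then b else a) = b := by
  classical
  obtain ⟨k, v, hk2, hvI, hvS⟩ := hWNU
  have h0 : 0 < k := lt_of_lt_of_le two_pos hk2
  have h1 : 1 < k := lt_of_lt_of_le one_lt_two hk2
  set z0 : Fin k := ⟨0, h0⟩ with hz0def
  set z1 : Fin k := ⟨1, h1⟩ with hz1def
  have hz01 : z1 ≠ z0 := by simp [hz0def, hz1def, Fin.ext_iff]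
  -- the elements s and e
  set s := v.eval ops (Function.update (fun _ => a) z0 b) with hsdef
  have hsAll : ∀ l : Fin k, v.eval ops (Function.update (fun _ => a) l b) = s :=
    fun l => hvS a b l z0
  set ee := v.eval ops (Function.update (fun _ => b) z0 a) with heedef
  have heAll : ∀ l : Fin k, v.eval ops (Function.update (fun _ => b) l a) = ee :=
    fun l => hvS b a l z0
  have hsB : s ∈ B := by
    refine hBsub k v hvI _ (fun i => ?_)
    rw [Function.update_apply]
    split
    · exact hbB
    · exact haB
  have heB : ee ∈ B := by
    refine hBsub k v hvI _ (fun i => ?_)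
    rw [Function.update_apply]
    split
    · exact haB
    · exact hbB
  -- robustness of s
  have hrobs : IsRobust ops a b s := by
    refine ⟨k, h0, v, hvI, fun l => Function.update (fun _ => a) l b, ?_, ?_, hsAll⟩
    · intro l r
      dsimp only
      rw [Function.update_apply]
      split
      · exact Or.inr rfl
      · exact Or.inl rfl
    · intro l
      simp
  -- b is generated by {a, s}
  have hbSg : b ∈ SgPair ops a s :=
    min_mem ops a b hBmin hab hba hbB (SgPair_subuniverse ops a b hba s)
      (SgPair_subset_B ops a hBsub haB hsB) (a_mem_SgPair ops a s)
      (s_mem_SgPair ops a s) hrobs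
  obtain ⟨G, hG, g, hgI, c, hc, hgc⟩ := hbSg
  -- the term T0 = g composed with v-blocks
  set fam : Fin G → ℕ := fun _ => k with hfamdef
  set K := Fintype.card (Cidx fam) with hKdef
  set E := cEquiv fam with hEdef
  set T0 := concatTerm fam (fun _ => v) g with hT0def
  have hKpos : 0 < K := concat_card_pos fam hG (fun _ => h0)
  have hT0I : IsIdemTerm ops T0 := concat_idem fam (fun _ => v) ops g hgI (fun _ => hvI)
  have hEE : ∀ p : Cidx fam, E.symm (E p) = p := fun p => Equiv.symm_apply_apply _ p
  set P : Cidx fam → A := fun p => if c p.1 = a then a else (if p.2 = z0 then b else a)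
    with hPdef
  set π : Fin K → A := fun r => P (E.symm r) with hπdef
  have hT0π : T0.eval ops π = b := by
    rw [hT0def, eval_concat]
    have hfun : (fun i => v.eval ops (fun l => π (E ⟨i, l⟩))) = c := by
      funext i
      have hblk : (fun l => π (E ⟨i, l⟩)) = fun l => P ⟨i, l⟩ :=
        funext fun l => congrArg P (hEE ⟨i, l⟩)
      rw [hblk]
      by_cases hci : c i = a
      · have : (fun l : Fin k => P ⟨i, l⟩) = fun _ => a := by
          funext l; simp [hPdef, hci]
        rw [this, hvI a]
        exact hci.symm
      · have hcs : c i = s := (hc i).resolve_left hci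
        have : (fun l : Fin k => P ⟨i, l⟩) = Function.update (fun _ => a) z0 b := by
          funext l; simp [hPdef, hci, Function.update_apply]
        rw [this, hsAll z0]
        exact hcs.symm
    rw [hfun]
    exact hgc
  set z0v := g.eval ops (fun i => if c i = a then b else ee) with hz0vdef
  have hT0πc : T0.eval ops (fun r => cmpl a b (π r)) = z0v := by
    rw [hT0def, eval_concat]
    have hfun : (fun i => v.eval ops (fun l => cmpl a b (π (E ⟨i, l⟩))))
        = fun i => if c i = a then b else ee := by
      funext i
      have hblk : (fun l => cmpl a b (π (E ⟨i, l⟩))) = fun l => cmpl a b (P ⟨i, l⟩) :=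
        funext fun l => congrArg (fun x => cmpl a b (P x)) (hEE ⟨i, l⟩)
      rw [hblk]
      by_cases hci : c i = a
      · have : (fun l : Fin k => cmpl a b (P ⟨i, l⟩)) = fun _ => b := by
          funext l; simp [hPdef, hci]
        rw [this, hvI b, if_pos hci]
      · have : (fun l : Fin k => cmpl a b (P ⟨i, l⟩)) = Function.update (fun _ => b) z0 a := by
          funext l
          by_cases hl : l = z0
          · subst hl
            rw [Function.update_self]
            simp [hPdef, hci, cmpl_b a b hba]
          · simp [hPdef, hci, hl, Function.update_apply]
        rw [this, heAll z0, if_neg hci]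
    rw [hfun]
  have hπd : ∀ r, π r = a ∨ π r = b := by
    intro r
    simp only [hπdef, hPdef]
    split
    · exact Or.inl rfl
    · split
      · exact Or.inr rfl
      · exact Or.inl rfl
  have hz0Fb : z0v ∈ FbSet ops a b :=
    ⟨K, hKpos, T0, hT0I, π, hπd, hT0π, hT0πc⟩
  -- robustness of z0v
  set off : Fin k → Fin k := fun l => if l = z0 then z1 else z0 with hoffdef
  have hoff : ∀ l, off l ≠ l := by
    intro l
    by_cases h : l = z0
    · simpa [hoffdef, h] using hz01
    · simpa [hoffdef, h] using (Ne.symm h)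
  set aslot : Cidx fam → Fin G → Fin k :=
    fun p i2 => if c p.1 = a then z0 else (if i2 = p.1 then off p.2 else z0) with haslotdef
  set Q : Cidx fam → Cidx fam → A :=
    fun p p2 => if c p2.1 = a then b else (if p2.2 = aslot p p2.1 then a else b) with hQdef
  have hrobz : IsRobust ops a b z0v := by
    refine ⟨K, hKpos, T0, hT0I, fun r r2 => Q (E.symm r) (E.symm r2), ?_, ?_, ?_⟩
    · intro l r
      simp only [hQdef]
      split
      · exact Or.inr rfl
      · split
        · exact Or.inl rfl
        · exact Or.inr rfl
    · intro r
      simp only [hQdef]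
      split
      · rfl
      · rename_i hcr
        rw [if_neg]
        have : aslot (E.symm r) (E.symm r).1 = off (E.symm r).2 := by
          simp [haslotdef, hcr]
        rw [this]
        exact Ne.symm (hoff _)
    · intro r
      dsimp only
      rw [hT0def, eval_concat]
      have hfun : (fun i => v.eval ops (fun l => (fun r2 => Q (E.symm r) (E.symm r2)) (E ⟨i, l⟩)))
          = fun i => if c i = a then b else ee := by
        funext i
        have hblk : (fun l => (fun r2 => Q (E.symm r) (E.symm r2)) (E ⟨i, l⟩))
            = fun l => Q (E.symm r) ⟨i, l⟩ :=
          funext fun l => congrArg (Q (E.symm r)) (hEE ⟨i, l⟩)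
        rw [hblk]
        by_cases hci : c i = a
        · have : (fun l : Fin k => Q (E.symm r) ⟨i, l⟩) = fun _ => b := by
            funext l; simp [hQdef, hci]
          rw [this, hvI b, if_pos hci]
        · have : (fun l : Fin k => Q (E.symm r) ⟨i, l⟩)
              = Function.update (fun _ => b) (aslot (E.symm r) i) a := by
            funext l
            by_cases hl : l = aslot (E.symm r) i
            · subst hl
              rw [Function.update_self]
              simp [hQdef, hci]
            · simp [hQdef, hci, hl, Function.update_apply]
          rw [this, heAll _, if_neg hci]
      rw [hfun]
  -- b itself is in FbSet
  have hbFb : b ∈ FbSet ops a b :=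
    min_mem ops a b hBmin hab hba hbB (FbSet_subuniverse ops a b hba)
      (FbSet_subset_B ops a b hBsub haB hbB) (a_mem_FbSet ops a b hba) hz0Fb hrobz
  obtain ⟨ks, hks, ts', hts'I, us, hus, husb, husc⟩ := hbFb
  refine ⟨comp ts' (fun l => if us l = a then (.var 0 : AlgTerm ι arity 2) else .var 1),
    ?_, ?_, ?_⟩
  · intro x
    rw [eval_comp]
    have : (fun j => AlgTerm.eval ops (if us j = a then (.var 0 : AlgTerm ι arity 2) else .var 1)
        (fun _ => x)) = fun _ => x := by
      funext j
      by_cases h : us j = a <;> simp [h]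
    rw [this]
    exact hts'I x
  · rw [eval_comp]
    have : (fun j => AlgTerm.eval ops (if us j = a then (.var 0 : AlgTerm ι arity 2) else .var 1)
        (fun i : Fin 2 => if i = 0 then a else b)) = us := by
      funext j
      rcases hus j with h | h
      · simp [h]
      · have hne : us j ≠ a := by rw [h]; exact hba
        rw [if_neg hne]
        show (if (1 : Fin 2) = 0 then a else b) = us j
        rw [if_neg (by decide : (1 : Fin 2) ≠ 0), h]
    rw [this]
    exact husb
  · rw [eval_comp]
    have : (fun j => AlgTerm.eval ops (if us j = a then (.var 0 : AlgTerm ι arity 2) else .var 1)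
        (fun i : Fin 2 => if i = 0 then b else a)) = fun l => cmpl a b (us l) := by
      funext j
      rcases hus j with h | h
      · rw [if_pos h]
        show (if (0 : Fin 2) = 0 then b else a) = cmpl a b (us j)
        rw [if_pos rfl, h, cmpl_a]
      · rw [if_neg (by rw [h]; exact hba)]
        show (if (1 : Fin 2) = 0 then b else a) = cmpl a b (us j)
        rw [if_neg (by decide : (1 : Fin 2) ≠ 0), h, cmpl_b a b hba]
    rw [this]
    exact husc

end KeyF

end CTB

namespace CTB

section Power

variable {ι : Type} {arity : ι → ℕ} {A : Type}
variable (ops : ∀ i, (Fin (arity i) → A) → A)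

lemma eval_pow {k : ℕ} (t : AlgTerm ι arity k) (X : Fin k → ℤ → A) (j : ℤ) :
    t.eval (powOps ops) X j = t.eval ops (fun i => X i j) := by
  induction t with
  | var i => rfl
  | app i ts ih =>
      show powOps ops i (fun m => (ts m).eval (powOps ops) X) j = _
      unfold powOps
      simp only [eval_app]
      congr 1
      funext m
      exact ih m

lemma closure_eval {S : Set (ℤ → A)} {k : ℕ} (t : AlgTerm ι arity k) (X : Fin k → ℤ → A)
    (hX : ∀ i, Closure (powOps ops) S (X i)) :
    Closure (powOps ops) S (t.eval (powOps ops) X) := by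
  induction t with
  | var i => exact hX i
  | app i ts ih => exact Closure.app i _ (fun m => ih m)

lemma cong_eval {S : Set (ℤ → A)} {θ : (ℤ → A) → (ℤ → A) → Prop}
    (hθ : IsCongOn (powOps ops) (Closure (powOps ops) S) θ)
    {k : ℕ} (t : AlgTerm ι arity k) (X Y : Fin k → ℤ → A)
    (hX : ∀ i, Closure (powOps ops) S (X i)) (hY : ∀ i, Closure (powOps ops) S (Y i))
    (hXY : ∀ i, θ (X i) (Y i)) :
    θ (t.eval (powOps ops) X) (t.eval (powOps ops) Y) := by
  induction t with
  | var i => exact hXY i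
  | app i ts ih =>
      exact hθ.2.2.2 i _ _ (fun m => closure_eval ops _ X hX)
        (fun m => closure_eval ops _ Y hY) ih

end Power

end CTB

/-- In the standing setup, if `A` has a weak near unanimity term, `θ` is a
congruence of `C`, and `p, q, r, s` are distinct indices outside `[-n,0]` with `α_p θ α_r`
and `α_q θ α_s`, then the set `{α_{mn} : (m,n) ∈ {p,r} × {q,s}} ∪ {α_{mnk} : (m,n,k) ∈
{p,r} × {q,s} × {p,q,r,s}}` is contained in `C` and in a single `θ`-class. -/
theorem stmt_5
    {ι A : Type} {arity : ι → ℕ} [Fintype A]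
    (ops : ∀ i : ι, (Fin (arity i) → A) → A)
    -- the universe of `A` is enumerated as `{a_0, a_{-1}, …, a_{-n}}`
    (n : ℕ) (aIdx : ℤ → A)
    (hEnumSurj : ∀ x : A, ∃ j ∈ Finset.Icc (-(n : ℤ)) 0, aIdx j = x)
    (hEnumInj : ∀ j ∈ Finset.Icc (-(n : ℤ)) 0, ∀ j' ∈ Finset.Icc (-(n : ℤ)) 0,
      aIdx j = aIdx j' → j = j')
    -- `A` has no cube term
    (hNoCube : ¬ HasCubeTerm ops)
    -- `B` is a subuniverse of the idempotent reduct `A_I`, without a cube term,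
    -- minimal for this property
    (B : Set A) (hBsub : IsSubuniverseI ops B)
    (hBnoCube : ¬ HasCubeTermOnI ops B)
    (hBmin : ∀ S : Set A, S ⊆ B → S ≠ B → S.Nonempty → IsSubuniverseI ops S →
      HasCubeTermOnI ops S)
    -- `(D, B)` is a cube term blocker for the algebra `B`
    (D : Set A) (hDsub : IsSubuniverseI ops D) (hDne : D.Nonempty)
    (hDB : D ⊆ B) (hDproper : D ≠ B)
    (hBlock : ∀ k : ℕ, 0 < k → ∀ t : AlgTerm ι arity k, IsIdemTerm ops t →
      ∃ i : Fin k, ∀ x : Fin k → A, (∀ j, x j ∈ B) → x i ∈ D → t.eval ops x ∈ D)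
    -- `a ∈ B ∖ D` and `b ∈ D` with `a ⊀ b` relative to the idempotent terms of `A`
    (a b : A) (haB : a ∈ B) (haD : a ∉ D) (hbD : b ∈ D)
    (hab : ¬ PrecI ops a b)
    -- `A` has a weak near unanimity term
    (hWNU : ∃ (k : ℕ) (w : AlgTerm ι arity k), IsWNU ops w)
    -- `θ` is a congruence of `C = Sg^{A^ℤ}(C_0)`
    (θ : (ℤ → A) → (ℤ → A) → Prop)
    (hθ : IsCongOn (powOps ops) (Closure (powOps ops) (C0set n aIdx a b)) θ)
    -- `p, q, r, s` are distinct indices in `ℤ ∖ [-n,0]`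
    (p q r s : ℤ)
    (hp : p ∉ Finset.Icc (-(n : ℤ)) 0) (hq : q ∉ Finset.Icc (-(n : ℤ)) 0)
    (hr : r ∉ Finset.Icc (-(n : ℤ)) 0) (hs : s ∉ Finset.Icc (-(n : ℤ)) 0)
    (hpq : p ≠ q) (hpr : p ≠ r) (hps : p ≠ s)
    (hqr : q ≠ r) (hqs : q ≠ s) (hrs : r ≠ s)
    (hθpr : θ (alphaFn n aIdx a b {p}) (alphaFn n aIdx a b {r}))
    (hθqs : θ (alphaFn n aIdx a b {q}) (alphaFn n aIdx a b {s})) :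
    (∀ x ∈ famSet n aIdx a b p q r s, Closure (powOps ops) (C0set n aIdx a b) x) ∧
    (∀ x ∈ famSet n aIdx a b p q r s, ∀ y ∈ famSet n aIdx a b p q r s, θ x y) := by
  classical
  have hba : b ≠ a := fun h => haD (h ▸ hbD)
  have hbB : b ∈ B := hDB hbD
  obtain ⟨f, hfI, hfab, hfba⟩ :=
    CTB.exists_semilattice_term ops hBsub hBmin haB hbB hab hba hWNU
  set S0 := C0set n aIdx a b with hS0
  set Cl := Closure (powOps ops) S0 with hCldef
  set α := alphaFn n aIdx a b with hα
  set e2 : (ℤ → A) → (ℤ → A) → ℤ → A :=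
    fun X Y => f.eval (powOps ops) (fun i => if i = 0 then X else Y) with he2
  have he2C : ∀ X Y, Cl X → Cl Y → Cl (e2 X Y) := by
    intro X Y hX hY
    exact CTB.closure_eval ops f (fun i => if i = 0 then X else Y)
      (fun i => by by_cases h : i = 0 <;> simp only [h, if_true, if_false] <;> assumption)
  have hcomp : ∀ X X' Y Y', Cl X → Cl X' → Cl Y → Cl Y' → θ X X' → θ Y Y' →
      θ (e2 X Y) (e2 X' Y') := by
    intro X X' Y Y' hX hX' hY hY' h1 h2
    exact CTB.cong_eval ops hθ f _ _
      (fun i => by by_cases h : i = 0 <;> simp only [h, if_true, if_false] <;> assumption)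
      (fun i => by by_cases h : i = 0 <;> simp only [h, if_true, if_false] <;> assumption)
      (fun i => by by_cases h : i = 0 <;> simp only [h, if_true, if_false] <;> assumption)
  have hub : ∀ I J : Finset ℤ, e2 (α I) (α J) = α (I ∪ J) := by
    intro I J
    funext j
    have hpow : e2 (α I) (α J) j
        = f.eval ops (fun i : Fin 2 => (if i = 0 then α I else α J) j) :=
      CTB.eval_pow ops f _ j
    rw [hpow]
    by_cases hj : j ∈ Finset.Icc (-(n : ℤ)) 0
    · have h1 : (fun i : Fin 2 => (if i = 0 then α I else α J) j) = fun _ => aIdx j := by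
        funext i
        by_cases h : i = 0 <;> simp [h, hα, alphaFn, hj]
      rw [h1, hfI]
      simp [hα, alphaFn, hj]
    · by_cases hjI : j ∈ I <;> by_cases hjJ : j ∈ J
      · have h1 : (fun i : Fin 2 => (if i = 0 then α I else α J) j) = fun _ => b := by
          funext i
          by_cases h : i = 0 <;> simp [h, hα, alphaFn, hj, hjI, hjJ]
        rw [h1, hfI]
        simp [hα, alphaFn, hj, Finset.mem_union, hjI]
      · have h1 : (fun i : Fin 2 => (if i = 0 then α I else α J) j)
            = fun i => if i = 0 then b else a := by
          funext i
          by_cases h : i = 0 <;> simp [h, hα, alphaFn, hj, hjI, hjJ]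
        rw [h1, hfba]
        simp [hα, alphaFn, hj, Finset.mem_union, hjI]
      · have h1 : (fun i : Fin 2 => (if i = 0 then α I else α J) j)
            = fun i => if i = 0 then a else b := by
          funext i
          by_cases h : i = 0 <;> simp [h, hα, alphaFn, hj, hjI, hjJ]
        rw [h1, hfab]
        simp [hα, alphaFn, hj, Finset.mem_union, hjJ]
      · have h1 : (fun i : Fin 2 => (if i = 0 then α I else α J) j) = fun _ => a := by
          funext i
          by_cases h : i = 0 <;> simp [h, hα, alphaFn, hj, hjI, hjJ]
        rw [h1, hfI]
        simp [hα, alphaFn, hj, Finset.mem_union, hjI, hjJ]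
  have hs1 : ∀ i : ℤ, i ∉ Finset.Icc (-(n : ℤ)) 0 → Cl (α {i}) := by
    intro i hi
    exact Closure.base ⟨i, hi, by simp [hα]⟩
  have hrefl : ∀ X, Cl X → θ X X := hθ.1
  have hsymm := hθ.2.1
  have htrans := hθ.2.2.1
  have hpm := hs1 p hp
  have hqm := hs1 q hq
  have hrm := hs1 r hr
  have hsm := hs1 s hs
  have hpair : ∀ u z : ℤ, e2 (α {u}) (α {z}) = α {u, z} := by
    intro u z
    refine (hub {u} {z}).trans (congrArg α ?_)
    ext t
    simp
  have hpairmem : ∀ u z : ℤ, u ∉ Finset.Icc (-(n : ℤ)) 0 → z ∉ Finset.Icc (-(n : ℤ)) 0 →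
      Cl (α {u, z}) := by
    intro u z hu hz
    rw [← hpair u z]
    exact he2C _ _ (hs1 u hu) (hs1 z hz)
  have hPmem : Cl (α {p, q}) := hpairmem p q hp hq
  have key : ∀ x ∈ famSet n aIdx a b p q r s, Cl x ∧ θ x (α {p, q}) := by
    intro x hx
    simp only [famSet, Set.mem_setOf_eq] at hx
    obtain ⟨m', hm', w, hw, hx⟩ := hx
    rw [← hα] at hx
    have hm'2 : m' = p ∨ m' = r := by simpa using hm'
    have hw2 : w = q ∨ w = s := by simpa using hw
    have hm'facts : m' ∉ Finset.Icc (-(n : ℤ)) 0 ∧ θ (α {m'}) (α {p}) := by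
      rcases hm'2 with rfl | rfl
      · exact ⟨hp, hrefl _ hpm⟩
      · exact ⟨hr, hsymm _ hpm _ hrm hθpr⟩
    have hwfacts : w ∉ Finset.Icc (-(n : ℤ)) 0 ∧ θ (α {w}) (α {q}) := by
      rcases hw2 with rfl | rfl
      · exact ⟨hq, hrefl _ hqm⟩
      · exact ⟨hs, hsymm _ hqm _ hsm hθqs⟩
    obtain ⟨hm'icc, hm'θ⟩ := hm'facts
    obtain ⟨hwicc, hwθ⟩ := hwfacts
    have hmemmw : Cl (α {m', w}) := hpairmem m' w hm'icc hwicc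
    have hpairθ : θ (α {m', w}) (α {p, q}) := by
      rw [← hpair m' w, ← hpair p q]
      exact hcomp _ _ _ _ (hs1 m' hm'icc) (hs1 p hp) (hs1 w hwicc) (hs1 q hq) hm'θ hwθ
    rcases hx with rfl | ⟨k', hk', rfl⟩
    · exact ⟨hmemmw, hpairθ⟩
    · have hk'4 : k' = p ∨ k' = q ∨ k' = r ∨ k' = s := by simpa using hk'
      obtain ⟨k'', hk''mem, hk''θ, hk'icc⟩ :
          ∃ k'', (k'' = m' ∨ k'' = w) ∧ θ (α {k'}) (α {k''}) ∧
            k' ∉ Finset.Icc (-(n : ℤ)) 0 := by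
        rcases hk'4 with rfl | rfl | rfl | rfl
        · refine ⟨m', Or.inl rfl, ?_, hp⟩
          rcases hm'2 with rfl | rfl
          · exact hrefl _ hpm
          · exact hθpr
        · refine ⟨w, Or.inr rfl, ?_, hq⟩
          rcases hw2 with rfl | rfl
          · exact hrefl _ hqm
          · exact hθqs
        · refine ⟨m', Or.inl rfl, ?_, hr⟩
          rcases hm'2 with rfl | rfl
          · exact hsymm _ hpm _ hrm hθpr
          · exact hrefl _ hrm
        · refine ⟨w, Or.inr rfl, ?_, hs⟩
          rcases hw2 with rfl | rfl
          · exact hsymm _ hqm _ hsm hθqs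
          · exact hrefl _ hsm
      have hk''icc : k'' ∉ Finset.Icc (-(n : ℤ)) 0 := by
        rcases hk''mem with rfl | rfl
        · exact hm'icc
        · exact hwicc
      have htrip : e2 (α {m', w}) (α {k'}) = α {m', w, k'} := by
        refine (hub _ _).trans (congrArg α ?_)
        ext z
        simp [or_assoc]
      have hself : e2 (α {m', w}) (α {k''}) = α {m', w} := by
        refine (hub _ _).trans (congrArg α ?_)
        refine Finset.union_eq_left.mpr (Finset.singleton_subset_iff.mpr ?_)
        rcases hk''mem with rfl | rfl
        · exact Finset.mem_insert_self _ _
        · exact Finset.mem_insert_of_mem (Finset.mem_singleton_self _)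
      have htripmem : Cl (α {m', w, k'}) := by
        rw [← htrip]
        exact he2C _ _ hmemmw (hs1 k' hk'icc)
      have htripθ : θ (α {m', w, k'}) (α {m', w}) := by
        have h := hcomp _ _ _ _ hmemmw hmemmw (hs1 k' hk'icc) (hs1 k'' hk''icc)
          (hrefl _ hmemmw) hk''θ
        rw [htrip, hself] at h
        exact h
      exact ⟨htripmem, htrans _ htripmem _ hmemmw _ hPmem htripθ hpairθ⟩
  constructor
  · intro x hx
    exact (key x hx).1
  · intro x hx y hy
    exact htrans x (key x hx).1 _ hPmem y (key y hy).1 (key x hx).2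
      (hsymm y (key y hy).1 _ hPmem (key y hy).2)
end

section
/- Assume the standing setup. Define α ∈ A^ℤ by α(j) = a_j for j ∈ [-n,0] and α(j) = a otherwise. Then α ∉ C; that is, there is no term t(x_1,…,x_m) of A and no indices i_1,…,i_m ∈ ℤ ∖ [-n,0] with t(α_{i_1},…,α_{i_m}) = α, where t is applied coordinatewise. -/
variable {ι : Type} {arity : ι → ℕ} {A : Type}

def AlgTerm.remap {k K : ℕ} (f : Fin k → Fin K) : AlgTerm ι arity k → AlgTerm ι arity K
  | .var j => .var (f j)
  | .app i ts => .app i (fun m => (ts m).remap f)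

theorem AlgTerm.eval_remap (ops : ∀ i, (Fin (arity i) → A) → A) {k K : ℕ} (f : Fin k → Fin K)
    (t : AlgTerm ι arity k) (v : Fin K → A) :
    (t.remap f).eval ops v = t.eval ops (v ∘ f) := by
  induction t with
  | var j => rfl
  | app i ts ih => simp only [remap, eval]; exact congrArg _ (funext fun m => ih m)

theorem closure_repr (ops : ∀ i, (Fin (arity i) → A) → A) (S : Set A) (x : A)
    (h : Closure ops S x) :
    ∃ (k : ℕ) (t : AlgTerm ι arity k) (v : Fin k → A), (∀ i, v i ∈ S) ∧ t.eval ops v = x := by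
  induction h with
  | @base x hx => exact ⟨1, .var 0, fun _ => x, fun _ => hx, rfl⟩
  | app i x hx ih =>
    choose k t v hv hev using ih
    have e : (Σ j : Fin (arity i), Fin (k j)) ≃ Fin (∑ j, k j) :=
      Fintype.equivFinOfCardEq (by simp)
    refine ⟨∑ j, k j, .app i (fun j => (t j).remap (fun s => e ⟨j, s⟩)),
      fun l => v (e.symm l).1 (e.symm l).2, fun l => hv _ _, ?_⟩
    simp only [AlgTerm.eval]
    refine congrArg _ (funext fun j => ?_)
    rw [AlgTerm.eval_remap]
    rw [← hev j]
    refine congrArg _ (funext fun s => ?_)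
    exact congrArg (fun p : Σ j, Fin (k j) => v p.1 p.2) (e.symm_apply_apply ⟨j, s⟩)

theorem eval_pow (ops : ∀ i, (Fin (arity i) → A) → A) {k : ℕ} (t : AlgTerm ι arity k)
    (x : Fin k → ℤ → A) (c : ℤ) :
    t.eval (powOps ops) x c = t.eval ops (fun i => x i c) := by
  induction t with
  | var j => rfl
  | app i ts ih =>
    simp only [AlgTerm.eval, powOps]
    exact congrArg _ (funext fun m => ih m)

/-- In the standing setup, the element `α ∈ A^ℤ` with `α(j) = a_j` for
`j ∈ [-n,0]` and `α(j) = a` otherwise (i.e. `alphaFn n aIdx a b ∅`) is not in `C`; that is,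
there is no term `t(x_1,…,x_m)` of `A` and indices `i_1,…,i_m ∈ ℤ ∖ [-n,0]` with
`t(α_{i_1},…,α_{i_m}) = α` coordinatewise. -/
theorem stmt_9
    {ι A : Type} {arity : ι → ℕ} [Fintype A]
    (ops : ∀ i : ι, (Fin (arity i) → A) → A)
    -- the universe of `A` is enumerated as `{a_0, a_{-1}, …, a_{-n}}`
    (n : ℕ) (aIdx : ℤ → A)
    (hEnumSurj : ∀ x : A, ∃ j ∈ Finset.Icc (-(n : ℤ)) 0, aIdx j = x)
    (hEnumInj : ∀ j ∈ Finset.Icc (-(n : ℤ)) 0, ∀ j' ∈ Finset.Icc (-(n : ℤ)) 0,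
      aIdx j = aIdx j' → j = j')
    -- `A` has no cube term
    (hNoCube : ¬ HasCubeTerm ops)
    -- `B` is a subuniverse of the idempotent reduct `A_I`, without a cube term,
    -- minimal for this property
    (B : Set A) (hBsub : IsSubuniverseI ops B)
    (hBnoCube : ¬ HasCubeTermOnI ops B)
    (hBmin : ∀ S : Set A, S ⊆ B → S ≠ B → S.Nonempty → IsSubuniverseI ops S →
      HasCubeTermOnI ops S)
    -- `(D, B)` is a cube term blocker for the algebra `B`
    (D : Set A) (hDsub : IsSubuniverseI ops D) (hDne : D.Nonempty)
    (hDB : D ⊆ B) (hDproper : D ≠ B)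
    (hBlock : ∀ k : ℕ, 0 < k → ∀ t : AlgTerm ι arity k, IsIdemTerm ops t →
      ∃ i : Fin k, ∀ x : Fin k → A, (∀ j, x j ∈ B) → x i ∈ D → t.eval ops x ∈ D)
    -- `a ∈ B ∖ D` and `b ∈ D` with `a ⊀ b` relative to the idempotent terms of `A`
    (a b : A) (haB : a ∈ B) (haD : a ∉ D) (hbD : b ∈ D)
    (hab : ¬ PrecI ops a b)
    :
    ¬ Closure (powOps ops) (C0set n aIdx a b) (alphaFn n aIdx a b ∅) ∧
    ¬ ∃ (m : ℕ) (t : AlgTerm ι arity m) (idx : Fin m → ℤ),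
        (∀ i : Fin m, idx i ∉ Finset.Icc (-(n : ℤ)) 0) ∧
        t.eval (powOps ops) (fun i => alphaFn n aIdx a b {idx i}) = alphaFn n aIdx a b ∅ := by
  have hne : a ≠ b := fun h => haD (h ▸ hbD)
  have key : ¬ ∃ (m : ℕ) (t : AlgTerm ι arity m) (idx : Fin m → ℤ),
      (∀ i : Fin m, idx i ∉ Finset.Icc (-(n : ℤ)) 0) ∧
      t.eval (powOps ops) (fun i => alphaFn n aIdx a b {idx i}) = alphaFn n aIdx a b ∅ := by
    rintro ⟨m, t, idx, hidx, heq⟩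
    have heval : ∀ c : ℤ, t.eval ops (fun i => alphaFn n aIdx a b {idx i} c)
        = alphaFn n aIdx a b ∅ c := fun c => by
      rw [← eval_pow, heq]
    rcases Nat.eq_zero_or_pos m with hm | hm
    · subst hm
      obtain ⟨j, hj, hjb⟩ := hEnumSurj b
      have h1 : (1 : ℤ) ∉ Finset.Icc (-(n : ℤ)) 0 := by
        simp only [Finset.mem_Icc]
        omega
      have e1 := heval 1
      have e2 := heval j
      have hsame : (fun i : Fin 0 => alphaFn n aIdx a b {idx i} (1 : ℤ))
          = (fun i : Fin 0 => alphaFn n aIdx a b {idx i} j) := funext fun i => i.elim0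
      rw [hsame] at e1
      rw [e1] at e2
      simp only [alphaFn, if_pos hj, if_neg h1, Finset.notMem_empty, if_false] at e2
      exact hne (e2.trans hjb)
    · have hidem : IsIdemTerm ops t := by
        intro x
        obtain ⟨j, hj, rfl⟩ := hEnumSurj x
        have := heval j
        simpa only [alphaFn, if_pos hj] using this
      apply hab
      refine ⟨m, m, hm, hm, t, hidem, fun i j => if idx j = idx i then b else a,
        fun i j => ?_, fun i => ⟨i, by simp [hne.symm]⟩, fun j => ?_⟩
      · dsimp only
        split
        · exact Or.inr rfl
        · exact Or.inl rfl
      · have := heval (idx j)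
        simp only [alphaFn, if_neg (hidx j), Finset.mem_singleton, Finset.notMem_empty,
          if_false] at this
        exact this
  refine ⟨fun hcl => ?_, key⟩
  obtain ⟨m, t, v, hv, hev⟩ := closure_repr (powOps ops) _ _ hcl
  choose idx hidx hvi using hv
  refine key ⟨m, t, idx, hidx, ?_⟩
  have hveq : (fun i => alphaFn n aIdx a b {idx i}) = v := funext fun i => (hvi i).symm
  rw [hveq, hev]
end
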